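/- Define c(n) = Σ_{k=0}^n C(6k,3k) * C(3k,2k) * C(2k,k) * C(n+k, n-k) * (-432)^{n-k}. Then for all n ≥ 0, (n+2)^3 * c(n+2) + 24(2n+3)(18n^2+54n+49) * c(n+1) + 186624 (n+1)^3 * c(n) = 0. -/

import Mathlib

open Finset

noncomputable def Aq (k : ℕ) : ℚ :=
  (Nat.choose (6*k) (3*k) : ℚ) * (Nat.choose (3*k) (2*k)) * (Nat.choose (2*k) k)

noncomputable def Tq (n k : ℕ) : ℚ :=
  Aq k * (Nat.choose (n + k) (n - k) : ℚ) * (-432 : ℚ) ^ (n - k)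

noncomputable def Gq (n k : ℕ) : ℚ :=
  864 * (2*(n:ℚ)+3) * (k:ℚ)^4 * Aq k * (-432:ℚ)^(n+1-k) * ((n+k).factorial : ℚ)
    / (((n+2-k).factorial : ℚ) * ((2*k).factorial : ℚ))

lemma nzfact : ∀ x : ℕ, ((x.factorial : ℚ)) ≠ 0 := fun x => by
  exact_mod_cast x.factorial_ne_zero

lemma hA (k : ℕ) : Aq k = ((6*k).factorial : ℚ) / (((3*k).factorial : ℚ) * ((k.factorial : ℚ))^3) := by
  unfold Aq
  rw [Nat.cast_choose ℚ (show 3*k ≤ 6*k by omega),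
      Nat.cast_choose ℚ (show 2*k ≤ 3*k by omega),
      Nat.cast_choose ℚ (show k ≤ 2*k by omega),
      show 6*k - 3*k = 3*k by omega, show 3*k - 2*k = k by omega,
      show 2*k - k = k by omega]
  field_simp [nzfact]

lemma fe : ∀ a : ℕ, (a+1).factorial = (a+1) * a.factorial := Nat.factorial_succ

lemma step (m k : ℕ) :
    (((k+m : ℕ) : ℚ)+2)^3 * Tq (k+m+2) k
      + 24*(2*((k+m : ℕ):ℚ)+3)*(18*((k+m : ℕ):ℚ)^2+54*((k+m : ℕ):ℚ)+49) * Tq (k+m+1) k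
      + 186624*(((k+m : ℕ):ℚ)+1)^3 * Tq (k+m) k
    = Gq (k+m) (k+1) - Gq (k+m) k := by
  unfold Tq Gq
  simp only [show k+m+2+k = 2*k+m+2 by omega, show k+m+2-k = m+2 by omega,
    show k+m+1+k = 2*k+m+1 by omega, show k+m+1-k = m+1 by omega,
    show k+m+k = 2*k+m by omega, show k+m-k = m by omega,
    show k+m+(k+1) = 2*k+m+1 by omega, show k+m+1-(k+1) = m by omega,
    show k+m+2-(k+1) = m+1 by omega, show 2*(k+1) = 2*k+2 by omega]
  rw [Nat.cast_choose ℚ (show m+2 ≤ 2*k+m+2 by omega),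
      Nat.cast_choose ℚ (show m+1 ≤ 2*k+m+1 by omega),
      Nat.cast_choose ℚ (show m ≤ 2*k+m by omega),
      show 2*k+m+2-(m+2) = 2*k by omega, show 2*k+m+1-(m+1) = 2*k by omega,
      show 2*k+m-m = 2*k by omega]
  rw [hA k, hA (k+1), show 6*(k+1) = 6*k+6 by ring, show 3*(k+1) = 3*k+3 by ring]
  have F1 : ((6*k+6).factorial : ℚ)
      = (6*(k:ℚ)+1)*(6*k+2)*(6*k+3)*(6*k+4)*(6*k+5)*(6*k+6)*((6*k).factorial) := by
    rw [show 6*k+6 = 6*k+5+1 by omega, fe, show 6*k+5 = 6*k+4+1 by omega, fe,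
        show 6*k+4 = 6*k+3+1 by omega, fe, show 6*k+3 = 6*k+2+1 by omega, fe,
        show 6*k+2 = 6*k+1+1 by omega, fe, show 6*k+1 = 6*k+0+1 by omega, fe]
    push_cast; ring
  have F2 : ((3*k+3).factorial : ℚ) = (3*(k:ℚ)+1)*(3*k+2)*(3*k+3)*((3*k).factorial) := by
    rw [show 3*k+3 = 3*k+2+1 by omega, fe, show 3*k+2 = 3*k+1+1 by omega, fe,
        show 3*k+1 = 3*k+0+1 by omega, fe]
    push_cast; ring
  have F3 : ((k+1).factorial : ℚ) = ((k:ℚ)+1)*(k.factorial) := by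
    rw [fe]; push_cast; ring
  have F4 : ((2*k+2).factorial : ℚ) = (2*(k:ℚ)+1)*(2*k+2)*((2*k).factorial) := by
    rw [show 2*k+2 = 2*k+1+1 by omega, fe, show 2*k+1 = 2*k+0+1 by omega, fe]
    push_cast; ring
  have F5 : ((2*k+m+2).factorial : ℚ)
      = (2*(k:ℚ)+m+1)*(2*k+m+2)*((2*k+m).factorial) := by
    rw [show 2*k+m+2 = 2*k+m+1+1 by omega, fe, show 2*k+m+1 = 2*k+m+0+1 by omega, fe]
    push_cast; ring
  have F6 : ((2*k+m+1).factorial : ℚ) = (2*(k:ℚ)+m+1)*((2*k+m).factorial) := by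
    rw [show 2*k+m+1 = 2*k+m+0+1 by omega, fe]
    push_cast; ring
  have F7 : ((m+2).factorial : ℚ) = ((m:ℚ)+1)*(m+2)*(m.factorial) := by
    rw [show m+2 = m+1+1 by omega, fe, fe]
    push_cast; ring
  have F8 : ((m+1).factorial : ℚ) = ((m:ℚ)+1)*(m.factorial) := by
    rw [fe]; push_cast; ring
  rw [F1, F2, F3, F4, F5, F6, F7, F8]
  have h1 : ((k:ℚ)+1) ≠ 0 := by positivity
  have h2 : ((m:ℚ)+1) ≠ 0 := by positivity
  have h3 : ((m:ℚ)+2) ≠ 0 := by positivity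
  have h4 : (2*(k:ℚ)+1) ≠ 0 := by positivity
  have h5 : (2*(k:ℚ)+2) ≠ 0 := by positivity
  have h6 : (3*(k:ℚ)+1) ≠ 0 := by positivity
  have h7 : (3*(k:ℚ)+2) ≠ 0 := by positivity
  have h8 : (3*(k:ℚ)+3) ≠ 0 := by positivity
  push_cast
  field_simp [nzfact]
  ring

lemma boundary (n : ℕ) :
    ((n:ℚ)+2)^3 * (Tq (n+2) (n+1) + Tq (n+2) (n+2))
      + 24*(2*(n:ℚ)+3)*(18*(n:ℚ)^2+54*(n:ℚ)+49) * Tq (n+1) (n+1)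
      + Gq n (n+1) = 0 := by
  unfold Tq Gq
  simp only [show n+2+(n+1) = 2*n+3 by omega, show n+2-(n+1) = 1 by omega,
    show n+2+(n+2) = 2*n+4 by omega, show n+2-(n+2) = 0 by omega,
    show n+1+(n+1) = 2*n+2 by omega, show n+1-(n+1) = 0 by omega,
    show n+(n+1) = 2*n+1 by omega, show 2*(n+1) = 2*n+2 by omega,
    Nat.choose_one_right, Nat.choose_zero_right, pow_one, pow_zero,
    Nat.cast_one, mul_one, one_mul]
  rw [hA (n+1), hA (n+2), show 6*(n+1) = 6*n+6 by ring, show 3*(n+1) = 3*n+3 by ring,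
      show 6*(n+2) = 6*n+12 by ring, show 3*(n+2) = 3*n+6 by ring]
  have F1 : ((6*n+12).factorial : ℚ)
      = (6*(n:ℚ)+7)*(6*n+8)*(6*n+9)*(6*n+10)*(6*n+11)*(6*n+12)*((6*n+6).factorial) := by
    rw [show 6*n+12 = 6*n+11+1 by omega, fe, show 6*n+11 = 6*n+10+1 by omega, fe,
        show 6*n+10 = 6*n+9+1 by omega, fe, show 6*n+9 = 6*n+8+1 by omega, fe,
        show 6*n+8 = 6*n+7+1 by omega, fe, show 6*n+7 = 6*n+6+1 by omega, fe]
    push_cast; ring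
  have F2 : ((3*n+6).factorial : ℚ) = (3*(n:ℚ)+4)*(3*n+5)*(3*n+6)*((3*n+3).factorial) := by
    rw [show 3*n+6 = 3*n+5+1 by omega, fe, show 3*n+5 = 3*n+4+1 by omega, fe,
        show 3*n+4 = 3*n+3+1 by omega, fe]
    push_cast; ring
  have F3 : ((n+2).factorial : ℚ) = ((n:ℚ)+2)*((n+1).factorial) := by
    rw [show n+2 = n+1+1 by omega, fe]; push_cast; ring
  have F4 : ((2*n+2).factorial : ℚ) = (2*(n:ℚ)+2)*((2*n+1).factorial) := by
    rw [show 2*n+2 = 2*n+1+1 by omega, fe]; push_cast; ring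
  rw [F1, F2, F3, F4]
  have h1 : ((n:ℚ)+1) ≠ 0 := by positivity
  have h2 : ((n:ℚ)+2) ≠ 0 := by positivity
  have h3 : (3*(n:ℚ)+4) ≠ 0 := by positivity
  have h4 : (3*(n:ℚ)+5) ≠ 0 := by positivity
  have h5 : (3*(n:ℚ)+6) ≠ 0 := by positivity
  have h6 : (2*(n:ℚ)+2) ≠ 0 := by positivity
  push_cast
  field_simp [nzfact]
  ring

lemma mainQ (n : ℕ) :
    ((n:ℚ)+2)^3 * (∑ k ∈ Finset.range (n+2+1), Tq (n+2) k)
      + 24*(2*(n:ℚ)+3)*(18*(n:ℚ)^2+54*(n:ℚ)+49) * (∑ k ∈ Finset.range (n+1+1), Tq (n+1) k)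
      + 186624*((n:ℚ)+1)^3 * (∑ k ∈ Finset.range (n+1), Tq n k) = 0 := by
  rw [Finset.sum_range_succ (f := Tq (n+2)) (n := n+2),
      Finset.sum_range_succ (f := Tq (n+2)) (n := n+1),
      Finset.sum_range_succ (f := Tq (n+1)) (n := n+1)]
  have hstep : ∀ k ∈ Finset.range (n+1),
      ((n:ℚ)+2)^3 * Tq (n+2) k
        + 24*(2*(n:ℚ)+3)*(18*(n:ℚ)^2+54*(n:ℚ)+49) * Tq (n+1) k
        + 186624*((n:ℚ)+1)^3 * Tq n k = Gq n (k+1) - Gq n k := by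
    intro k hk
    have hk' : k ≤ n := Nat.lt_succ_iff.mp (Finset.mem_range.mp hk)
    obtain ⟨m, rfl⟩ : ∃ m, n = k + m := ⟨n - k, by omega⟩
    exact step m k
  have hS : ((n:ℚ)+2)^3 * (∑ k ∈ Finset.range (n+1), Tq (n+2) k)
      + 24*(2*(n:ℚ)+3)*(18*(n:ℚ)^2+54*(n:ℚ)+49) * (∑ k ∈ Finset.range (n+1), Tq (n+1) k)
      + 186624*((n:ℚ)+1)^3 * (∑ k ∈ Finset.range (n+1), Tq n k) = Gq n (n+1) := by
    rw [Finset.mul_sum, Finset.mul_sum, Finset.mul_sum, ← Finset.sum_add_distrib,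
        ← Finset.sum_add_distrib, Finset.sum_congr rfl hstep,
        Finset.sum_range_sub (Gq n) (n+1)]
    have G0 : Gq n 0 = 0 := by unfold Gq; norm_num
    rw [G0, sub_zero]
  have hB := boundary n
  linear_combination hS + hB

theorem stmt_5 (c : ℕ → ℤ)
    (hc : ∀ n : ℕ, c n = ∑ k ∈ Finset.range (n + 1),
      (Nat.choose (6*k) (3*k) : ℤ) * (Nat.choose (3*k) (2*k)) * (Nat.choose (2*k) k) *
        (Nat.choose (n + k) (n - k)) * (-432 : ℤ) ^ (n - k)) :
    ∀ n : ℕ,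
      ((n : ℤ) + 2) ^ 3 * c (n + 2) +
        24 * (2 * (n : ℤ) + 3) * (18 * (n : ℤ) ^ 2 + 54 * n + 49) * c (n + 1) +
        186624 * ((n : ℤ) + 1) ^ 3 * c n = 0 := by
  intro n
  have M := mainQ n
  simp only [Tq, Aq] at M
  rw [hc n, hc (n+1), hc (n+2)]
  exact_mod_cast M
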